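/- Let X, Y be smooth real Banach spaces, T : X → Y a bounded linear operator attaining its norm at a unit vector x. Then T maps the Birkhoff-James orthogonal complement of x into the Birkhoff-James orthogonal complement of Tx: for every w ∈ X with x ⊥_B w, one has Tx ⊥_B Tw. -/

import Mathlib

/-- Birkhoff-James orthogonality: `u ⊥_B v` iff `‖u + λ v‖ ≥ ‖u‖` for all real `λ`. -/
def BJOrth {E : Type*} [NormedAddCommGroup E] [NormedSpace ℝ E] (u v : E) : Prop :=
  ∀ l : ℝ, ‖u‖ ≤ ‖u + l • v‖

theorem stmt3 {X Y : Type*} [NormedAddCommGroup X] [NormedSpace ℝ X] [CompleteSpace X]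
    [NormedAddCommGroup Y] [NormedSpace ℝ Y] [CompleteSpace Y]
    (hsmX : ∀ z : X, ‖z‖ = 1 → ∃! f : X →L[ℝ] ℝ, ‖f‖ = 1 ∧ f z = 1)
    (hsmY : ∀ z : Y, ‖z‖ = 1 → ∃! f : Y →L[ℝ] ℝ, ‖f‖ = 1 ∧ f z = 1)
    (T : X →L[ℝ] Y) (x : X) (hx : ‖x‖ = 1) (hatt : ‖T x‖ = ‖T‖)
    (w : X) (hw : BJOrth x w) : BJOrth (T x) (T w) := by
  by_cases hTx : T x = 0
  · intro l; simp [hTx]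
  have hx0 : x ≠ 0 := by intro h; rw [h, norm_zero] at hx; norm_num at hx
  -- the quotient seminorm by span {w}
  set p : X → ℝ := fun v => ⨅ t : ℝ, ‖v + t • w‖ with hpdef
  have hbdd : ∀ v : X, BddBelow (Set.range fun t : ℝ => ‖v + t • w‖) :=
    fun v => ⟨0, by rintro a ⟨t, rfl⟩; exact norm_nonneg _⟩
  have hple : ∀ v t, p v ≤ ‖v + t • w‖ := fun v t => ciInf_le (hbdd v) t
  have hp0 : ∀ v, 0 ≤ p v := fun v => le_ciInf fun t => norm_nonneg _
  have hpnorm : ∀ v, p v ≤ ‖v‖ := fun v => by simpa using hple v 0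
  have hhom : ∀ c : ℝ, 0 < c → ∀ v, p (c • v) = c * p v := by
    intro c hc v
    apply le_antisymm
    · rw [mul_comm, ← div_le_iff₀ hc]
      refine le_ciInf fun s => ?_
      rw [div_le_iff₀ hc]
      calc p (c • v) ≤ ‖c • v + (c * s) • w‖ := hple _ _
        _ = ‖v + s • w‖ * c := by
            rw [mul_smul, ← smul_add, norm_smul, Real.norm_of_nonneg hc.le, mul_comm]
    · refine le_ciInf fun t => ?_
      have h1 : c • v + t • w = c • (v + (t / c) • w) := by
        rw [smul_add, smul_smul, mul_div_cancel₀ _ hc.ne']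
      rw [h1, norm_smul, Real.norm_of_nonneg hc.le]
      exact mul_le_mul_of_nonneg_left (hple v (t / c)) hc.le
  have hadd : ∀ u v, p (u + v) ≤ p u + p v := by
    intro u v
    have h1 : ∀ s t : ℝ, p (u + v) ≤ ‖u + s • w‖ + ‖v + t • w‖ := by
      intro s t
      calc p (u + v) ≤ ‖(u + v) + (s + t) • w‖ := hple _ _
        _ ≤ ‖u + s • w‖ + ‖v + t • w‖ := by
            rw [add_smul]
            calc ‖u + v + (s • w + t • w)‖ = ‖(u + s • w) + (v + t • w)‖ := by
                  congr 1; abel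
              _ ≤ _ := norm_add_le _ _
    have h2 : ∀ s, p (u + v) - ‖u + s • w‖ ≤ p v := fun s =>
      le_ciInf fun t => by linarith [h1 s t]
    have h3 : p (u + v) - p v ≤ p u := le_ciInf fun s => by linarith [h2 s]
    linarith
  have hpx : p x = 1 := le_antisymm (by simpa [hx] using hple x 0)
    (le_ciInf fun t => by simpa [hx] using hw t)
  have hpw : p w ≤ 0 := by
    have := hple w (-1); simpa using this
  have hpnw : p (-w) ≤ 0 := by
    have := hple (-w) 1; simpa using this
  -- Hahn-Banach extension
  set f := LinearPMap.mkSpanSingleton (K := ℝ) (L := ℝ) (σ := RingHom.id ℝ) x (1 : ℝ) hx0 with hfdef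
  have hf : ∀ z : f.domain, f z ≤ p z := by
    rintro ⟨z, hz⟩
    rcases Submodule.mem_span_singleton.1 hz with ⟨c, rfl⟩
    have hfz : f ⟨c • x, hz⟩ = c • (1 : ℝ) := LinearPMap.mkSpanSingleton'_apply x 1 _ c hz
    rw [hfz, smul_eq_mul, mul_one]
    rcases lt_trichotomy c 0 with hc | hc | hc
    · exact le_trans hc.le (hp0 _)
    · simp only [hc, zero_smul]
      have : p (0 : X) ≤ 0 := by simpa using hpnorm 0
      linarith [hp0 (0 : X)]
    · rw [hhom c hc x, hpx, mul_one]
  obtain ⟨g, hg_ext, hg_le⟩ := exists_extension_of_le_sublinear f p hhom hadd hf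
  have hgx : g x = 1 := by
    have h := hg_ext ⟨x, Submodule.mem_span_singleton_self x⟩
    rwa [LinearPMap.mkSpanSingleton_apply ℝ ℝ hx0 1] at h
  have hgw : g w = 0 := by
    have h1 : g w ≤ 0 := le_trans (hg_le w) hpw
    have h2 : g (-w) ≤ 0 := le_trans (hg_le (-w)) hpnw
    rw [map_neg] at h2; linarith
  have hgb : ∀ v, ‖g v‖ ≤ 1 * ‖v‖ := by
    intro v
    rw [one_mul, Real.norm_eq_abs, abs_le]
    constructor
    · have := le_trans (hg_le (-v)) (hpnorm (-v))
      rw [map_neg, norm_neg] at this; linarith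
    · exact le_trans (hg_le v) (hpnorm v)
  set F := g.mkContinuous 1 hgb with hFdef
  have hFx : F x = 1 := hgx
  have hFnorm : ‖F‖ = 1 := by
    apply le_antisymm (g.mkContinuous_norm_le zero_le_one hgb)
    have := F.le_opNorm x
    rw [hFx, hx, mul_one] at this
    simpa using this
  -- second supporting functional via T
  obtain ⟨G, hG1, hGTx⟩ := exists_dual_vector ℝ (T x) (norm_ne_zero_iff.mpr hTx)
  have hTxpos : (0 : ℝ) < ‖T x‖ := norm_pos_iff.2 hTx
  set F2 : X →L[ℝ] ℝ := ‖T x‖⁻¹ • (G.comp T) with hF2def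
  have hF2x : F2 x = 1 := by
    simp only [hF2def, ContinuousLinearMap.smul_apply, ContinuousLinearMap.comp_apply]
    rw [hGTx]
    simp only [RCLike.ofReal_real_eq_id, id, smul_eq_mul]
    field_simp
  have hF2norm : ‖F2‖ = 1 := by
    apply le_antisymm
    · have hTpos : (0:ℝ) < ‖T‖ := hatt ▸ hTxpos
      calc ‖F2‖ = ‖T x‖⁻¹ * ‖G.comp T‖ := by
            rw [hF2def, norm_smul ‖T x‖⁻¹ (G.comp T), Real.norm_eq_abs, abs_of_pos (inv_pos.2 hTxpos)]
        _ ≤ ‖T x‖⁻¹ * (‖G‖ * ‖T‖) := by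
            gcongr; exact G.opNorm_comp_le T
        _ = 1 := by rw [hG1, one_mul, hatt, inv_mul_cancel₀ hTpos.ne']
    · have := F2.le_opNorm x
      rw [hF2x, hx, mul_one] at this
      simpa using this
  -- uniqueness
  obtain ⟨f0, _, huniq⟩ := hsmX x hx
  have hFeq : F = F2 := by
    rw [huniq F ⟨hFnorm, hFx⟩, huniq F2 ⟨hF2norm, hF2x⟩]
  have hGTw : G (T w) = 0 := by
    have h := congrArg (fun φ : X →L[ℝ] ℝ => φ w) hFeq
    simp only [hF2def, ContinuousLinearMap.smul_apply, ContinuousLinearMap.comp_apply] at h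
    have hFw : F w = 0 := hgw
    rw [hFw] at h
    have := h.symm
    field_simp at this
    exact (smul_eq_zero.mp this).resolve_left (one_div_ne_zero hTxpos.ne')
  -- conclude
  intro l
  have : ‖T x‖ = G (T x + l • T w) := by
    rw [map_add, map_smul, hGTw, hGTx]; simp
  calc ‖T x‖ = G (T x + l • T w) := this
    _ ≤ ‖G (T x + l • T w)‖ := le_abs_self _
    _ ≤ ‖G‖ * ‖T x + l • T w‖ := G.le_opNorm _
    _ = ‖T x + l • T w‖ := by rw [hG1, one_mul]
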